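/- For all (φ,φ̄), (ψ,ψ̄) ∈ G(T,R), one has d(φ∘ψ) = d(φ) + d(ψ). -/

import Mathlib

open Module Submodule

noncomputable section

abbrev TT : Type := (ℕ → ℂ) × (ℕ →₀ ℂ)
abbrev RR : Type := (ℕ →₀ ℂ) × (ℕ → ℂ)

lemma lc_v_add (v w : ℕ → ℂ) (l : ℕ →₀ ℂ) :
    Finsupp.linearCombination ℂ (v + w) l
      = Finsupp.linearCombination ℂ v l + Finsupp.linearCombination ℂ w l := by
  classical
  simp only [Finsupp.linearCombination_apply]
  rw [← Finsupp.sum_add]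
  exact Finsupp.sum_congr fun i _ => by simp [Pi.add_apply, smul_add, mul_add]

lemma lc_v_smul (c : ℂ) (v : ℕ → ℂ) (l : ℕ →₀ ℂ) :
    Finsupp.linearCombination ℂ (c • v) l = c • Finsupp.linearCombination ℂ v l := by
  classical
  simp only [Finsupp.linearCombination_apply, Finsupp.smul_sum]
  exact Finsupp.sum_congr fun i _ => by simp [Pi.smul_apply, smul_comm, smul_eq_mul, mul_left_comm]

/-- The nondegenerate pairing `p : T × R → ℂ`,
`p((ω,u),(w,ν)) = Σ_i ω(i)w(i) + Σ_i u(i)ν(i)`. -/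
def pairB : TT →ₗ[ℂ] RR →ₗ[ℂ] ℂ :=
  LinearMap.mk₂ ℂ
    (fun x y => Finsupp.linearCombination ℂ x.1 y.1 + Finsupp.linearCombination ℂ y.2 x.2)
    (fun x x' y => by
      simp only [Prod.fst_add, Prod.snd_add, lc_v_add, map_add]; ring)
    (fun c x y => by
      simp only [Prod.smul_fst, Prod.smul_snd, lc_v_smul, map_smul, smul_add])
    (fun x y y' => by
      simp only [Prod.fst_add, Prod.snd_add, lc_v_add, map_add]; ring)
    (fun c x y => by
      simp only [Prod.smul_fst, Prod.smul_snd, lc_v_smul, map_smul, smul_add])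

/-- The Mackey-group condition on a pair of automorphisms:
`p(φ x, y) = p(x, φ̄ y)` for all `x ∈ T`, `y ∈ R`. -/
def IsMackey (φ : TT ≃ₗ[ℂ] TT) (ψ : RR ≃ₗ[ℂ] RR) : Prop :=
  ∀ (x : TT) (y : RR), pairB (φ x) y = pairB x (ψ y)

/-- `W^♯ = (ℕ→ℂ) × {0} ⊆ T`. -/
def Wsharp : Submodule ℂ TT := LinearMap.range (LinearMap.inl ℂ (ℕ → ℂ) (ℕ →₀ ℂ))

/-- `U^♯ = {0} × (ℕ→ℂ) ⊆ R`. -/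
def Usharp : Submodule ℂ RR := LinearMap.range (LinearMap.inr ℂ (ℕ →₀ ℂ) (ℕ → ℂ))

/-- `V = (ℕ→₀ℂ) × (ℕ→₀ℂ) ⊆ T`. -/
def Vsub : Submodule ℂ TT :=
  LinearMap.range
    ((Finsupp.lcoeFun : (ℕ →₀ ℂ) →ₗ[ℂ] (ℕ → ℂ)).prodMap
      (LinearMap.id : (ℕ →₀ ℂ) →ₗ[ℂ] (ℕ →₀ ℂ)))

/-- `W = (ℕ→₀ℂ) × {0} ⊆ T`. -/
def Wsub : Submodule ℂ TT :=
  LinearMap.range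
    ((LinearMap.inl ℂ (ℕ → ℂ) (ℕ →₀ ℂ)).comp
      (Finsupp.lcoeFun : (ℕ →₀ ℂ) →ₗ[ℂ] (ℕ → ℂ)))

/-- `π_U : T → (ℕ→₀ℂ)`, the second projection. -/
def piU : TT →ₗ[ℂ] (ℕ →₀ ℂ) := LinearMap.snd ℂ (ℕ → ℂ) (ℕ →₀ ℂ)

/-- `π_{W*} : R → (ℕ→₀ℂ)`, the first projection. -/
def piW : RR →ₗ[ℂ] (ℕ →₀ ℂ) := LinearMap.fst ℂ (ℕ →₀ ℂ) (ℕ → ℂ)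

/-- The degree `d(φ) = dim π_U(φ(W^♯)) − dim π_U(φ^{-1}(W^♯))`. -/
def deg (φ : TT ≃ₗ[ℂ] TT) : ℤ :=
  (Module.finrank ℂ ((Wsharp.map φ.toLinearMap).map piU) : ℤ) -
    (Module.finrank ℂ ((Wsharp.map φ.symm.toLinearMap).map piU) : ℤ)

/-- `span {(δ_i, 0) : i ≥ n} ⊆ T`. -/
def tailSpan (n : ℕ) : Submodule ℂ TT :=
  Submodule.span ℂ
    ((fun i => ((((Finsupp.single i (1 : ℂ)) : ℕ →₀ ℂ) : ℕ → ℂ), (0 : ℕ →₀ ℂ))) '' {i | n ≤ i})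

/-- `W'` is E-commensurable of index `k` with `W`:
`W' = G ⊕ span{(δ_i,0) : i ≥ n}` with `G ⊆ V` finite-dimensional of dimension `n + k`. -/
def Ecomm (W' : Submodule ℂ TT) (k : ℤ) : Prop :=
  ∃ (n : ℕ) (G : Submodule ℂ TT), G ≤ Vsub ∧ FiniteDimensional ℂ G ∧
    (Module.finrank ℂ G : ℤ) = (n : ℤ) + k ∧ Disjoint G (tailSpan n) ∧
    W' = G ⊔ tailSpan n

/-- `W'^⊥ = {y ∈ R : p(x,y) = 0 for all x ∈ W'}`. -/
def perpR (W' : Submodule ℂ TT) : Submodule ℂ RR :=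
  ⨅ x ∈ (W' : Set TT), LinearMap.ker (pairB x)

/-- `Y^⊥ = {x ∈ T : p(x,y) = 0 for all y ∈ Y}`. -/
def perpT (Y : Submodule ℂ RR) : Submodule ℂ TT :=
  ⨅ y ∈ (Y : Set RR), LinearMap.ker (pairB.flip y)

/-- The action `φ·W' = φ((W'^⊥)^⊥) ∩ V`. -/
def actOn (φ : TT ≃ₗ[ℂ] TT) (W' : Submodule ℂ TT) : Submodule ℂ TT :=
  ((perpT (perpR W')).map φ.toLinearMap) ⊓ Vsub

end

/-! ### Auxiliary machinery for the degree cocycle -/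

noncomputable section AuxProof
open Module Submodule

section Soft
variable {M N P : Type*} [AddCommGroup M] [Module ℂ M] [AddCommGroup N] [Module ℂ N]
  [AddCommGroup P] [Module ℂ P]

lemma quot_iso (f : M →ₗ[ℂ] N) (A : Submodule ℂ M) :
    Nonempty ((A ⧸ (Submodule.comap A.subtype (LinearMap.ker f ⊓ A))) ≃ₗ[ℂ] (A.map f)) := by
  have h1 : Submodule.comap A.subtype (LinearMap.ker f ⊓ A) = LinearMap.ker (f.domRestrict A) := by
    rw [LinearMap.ker_domRestrict]; ext x; simp [x.2]
  exact ⟨(Submodule.quotEquivOfEq _ _ h1).trans ((f.domRestrict A).quotKerEquivRange.trans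
    (LinearEquiv.ofEq _ _ (LinearMap.range_domRestrict A f)))⟩

lemma map_iso (f : M →ₗ[ℂ] N) (g : M →ₗ[ℂ] P) (A : Submodule ℂ M)
    (h : LinearMap.ker f ⊓ A = LinearMap.ker g ⊓ A) :
    Nonempty ((A.map f) ≃ₗ[ℂ] (A.map g)) := by
  obtain ⟨e1⟩ := quot_iso f A
  obtain ⟨e2⟩ := quot_iso g A
  exact ⟨e1.symm.trans ((Submodule.quotEquivOfEq _ _ (by rw [h])).trans e2)⟩

lemma fd_map_congr (f : M →ₗ[ℂ] N) (g : M →ₗ[ℂ] P) (A : Submodule ℂ M)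
    (h : LinearMap.ker f ⊓ A = LinearMap.ker g ⊓ A) (hf : FiniteDimensional ℂ (A.map f)) :
    FiniteDimensional ℂ (A.map g) :=
  (map_iso f g A h).elim fun e => haveI := hf; e.finiteDimensional

/-- transport of quotient-images along a linear equivalence -/
lemma q_equiv (e : M ≃ₗ[ℂ] M) (D A : Submodule ℂ M) :
    Nonempty ((A.map D.mkQ) ≃ₗ[ℂ]
      ((A.map e.toLinearMap).map ((D.map e.toLinearMap).mkQ))) := by
  have hker : LinearMap.ker (((D.map e.toLinearMap).mkQ).comp e.toLinearMap) = D := by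
    rw [LinearMap.ker_comp, Submodule.ker_mkQ]
    exact Submodule.comap_map_eq_of_injective e.injective D
  obtain ⟨i⟩ := map_iso D.mkQ (((D.map e.toLinearMap).mkQ).comp e.toLinearMap) A
    (by rw [hker, Submodule.ker_mkQ])
  rw [Submodule.map_comp] at i
  exact ⟨i⟩

lemma ker_mapQ_id (D E : Submodule ℂ M) (hDE : D ≤ E) :
    LinearMap.ker (D.mapQ E LinearMap.id (by simpa using hDE)) = E.map D.mkQ := by
  ext x
  obtain ⟨y, rfl⟩ := D.mkQ_surjective x
  constructor
  · intro hx
    have hy : y ∈ E := by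
      simpa [LinearMap.mem_ker, Submodule.mapQ_apply, Submodule.Quotient.mk_eq_zero] using hx
    exact Submodule.mem_map_of_mem hy
  · rintro ⟨z, hz, hzx⟩
    have hd : y - z ∈ D := by
      rwa [← Submodule.Quotient.eq, ← Submodule.mkQ_apply, ← Submodule.mkQ_apply, eq_comm]
    have hy : y ∈ E := by
      have := add_mem (hDE hd) hz
      simpa using this
    simp [LinearMap.mem_ker, Submodule.mapQ_apply, Submodule.Quotient.mk_eq_zero, hy]

lemma mkQ_factor (D E : Submodule ℂ M) (hDE : D ≤ E) :
    E.mkQ = (D.mapQ E LinearMap.id (by simpa using hDE)).comp D.mkQ := by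
  ext x; simp [Submodule.mapQ_apply]

lemma tower_eq (D E A : Submodule ℂ M) (hDE : D ≤ E) (hEA : E ≤ A)
    [hfd : FiniteDimensional ℂ (A.map D.mkQ)] :
    finrank ℂ (A.map D.mkQ) = finrank ℂ (A.map E.mkQ) + finrank ℂ (E.map D.mkQ) := by
  set π : (M ⧸ D) →ₗ[ℂ] M ⧸ E := D.mapQ E LinearMap.id (by simpa using hDE) with hπ
  have hkπ : LinearMap.ker π = E.map D.mkQ := ker_mapQ_id D E hDE
  have hEA2 : E.map D.mkQ ≤ A.map D.mkQ := Submodule.map_mono hEA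
  have himg : (A.map D.mkQ).map π = A.map E.mkQ := by
    rw [← Submodule.map_comp, ← mkQ_factor D E hDE]
  obtain ⟨i⟩ := quot_iso π (A.map D.mkQ)
  rw [hkπ, inf_eq_left.mpr hEA2] at i
  have h2 : finrank ℂ ((A.map D.mkQ).map π)
      = finrank ℂ ((A.map D.mkQ) ⧸ (Submodule.comap (A.map D.mkQ).subtype (E.map D.mkQ))) :=
    i.symm.finrank_eq
  have h3 : finrank ℂ (Submodule.comap (A.map D.mkQ).subtype (E.map D.mkQ))
      = finrank ℂ (E.map D.mkQ) :=
    (Submodule.comapSubtypeEquivOfLe hEA2).finrank_eq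
  have h4 := Submodule.finrank_quotient_add_finrank
    (Submodule.comap (A.map D.mkQ).subtype (E.map D.mkQ))
  rw [himg] at h2
  omega

lemma tower_fin (D E A : Submodule ℂ M) (hDE : D ≤ E) (hEA : E ≤ A)
    (h1 : FiniteDimensional ℂ (A.map E.mkQ)) (h2 : FiniteDimensional ℂ (E.map D.mkQ)) :
    FiniteDimensional ℂ (A.map D.mkQ) := by
  set π : (M ⧸ D) →ₗ[ℂ] M ⧸ E := D.mapQ E LinearMap.id (by simpa using hDE) with hπ
  have hkπ : LinearMap.ker π = E.map D.mkQ := ker_mapQ_id D E hDE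
  have himg : (A.map D.mkQ).map π = A.map E.mkQ := by
    rw [← Submodule.map_comp, ← mkQ_factor D E hDE]
  rw [← Submodule.fg_iff_finiteDimensional]
  apply Submodule.fg_of_fg_map_of_fg_inf_ker π
  · rw [himg, Submodule.fg_iff_finiteDimensional]; exact h1
  · rw [hkπ, Submodule.fg_iff_finiteDimensional]
    haveI := h2
    exact Submodule.finiteDimensional_of_le inf_le_right

/-- The relative-index cocycle identity, in terms of quotient images. -/
lemma main_calc (A B K : Submodule ℂ M)
    (f1 : FiniteDimensional ℂ (B.map (B ⊓ K).mkQ))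
    (f2 : FiniteDimensional ℂ (K.map (B ⊓ K).mkQ))
    (f3 : FiniteDimensional ℂ (A.map (A ⊓ B).mkQ))
    (f4 : FiniteDimensional ℂ (B.map (A ⊓ B).mkQ)) :
    (finrank ℂ (A.map (A ⊓ K).mkQ) : ℤ) - (finrank ℂ (K.map (A ⊓ K).mkQ) : ℤ)
      = ((finrank ℂ (B.map (B ⊓ K).mkQ) : ℤ) - (finrank ℂ (K.map (B ⊓ K).mkQ) : ℤ))
        + ((finrank ℂ (A.map (A ⊓ B).mkQ) : ℤ) - (finrank ℂ (B.map (A ⊓ B).mkQ) : ℤ)) := by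
  set D : Submodule ℂ M := A ⊓ B ⊓ K with hD
  have hDAB : D ≤ A ⊓ B := inf_le_left
  have hDBK : D ≤ B ⊓ K := le_inf (inf_le_left.trans inf_le_right) inf_le_right
  have hDAK : D ≤ A ⊓ K := le_inf (inf_le_left.trans inf_le_left) inf_le_right
  have f5 : FiniteDimensional ℂ ((A ⊓ B).map D.mkQ) := by
    haveI := f1
    have h5a : FiniteDimensional ℂ ((A ⊓ B).map (B ⊓ K).mkQ) :=
      Submodule.finiteDimensional_of_le (Submodule.map_mono inf_le_right)
    exact fd_map_congr _ _ _
      (by rw [Submodule.ker_mkQ, Submodule.ker_mkQ]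
          ext x; simp only [hD, Submodule.mem_inf]; tauto) h5a
  have f5' : FiniteDimensional ℂ ((B ⊓ K).map D.mkQ) := by
    haveI := f4
    have h5a : FiniteDimensional ℂ ((B ⊓ K).map (A ⊓ B).mkQ) :=
      Submodule.finiteDimensional_of_le (Submodule.map_mono inf_le_left)
    exact fd_map_congr _ _ _
      (by rw [Submodule.ker_mkQ, Submodule.ker_mkQ]
          ext x; simp only [hD, Submodule.mem_inf]; tauto) h5a
  haveI fdA : FiniteDimensional ℂ (A.map D.mkQ) := tower_fin D (A ⊓ B) A hDAB inf_le_left f3 f5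
  haveI fdB : FiniteDimensional ℂ (B.map D.mkQ) := tower_fin D (B ⊓ K) B hDBK inf_le_left f1 f5'
  haveI fdK : FiniteDimensional ℂ (K.map D.mkQ) := tower_fin D (B ⊓ K) K hDBK inf_le_right f2 f5'
  have e1 := tower_eq D (A ⊓ B) A hDAB inf_le_left
  have e2 := tower_eq D (A ⊓ B) B hDAB inf_le_right
  have e3 := tower_eq D (B ⊓ K) B hDBK inf_le_left
  have e4 := tower_eq D (B ⊓ K) K hDBK inf_le_right
  have e5 := tower_eq D (A ⊓ K) A hDAK inf_le_left
  have e6 := tower_eq D (A ⊓ K) K hDAK inf_le_right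
  omega

end Soft

lemma wsharp_eq_ker : Wsharp = LinearMap.ker piU := LinearMap.range_inl ℂ _ _

lemma mackey_symm {φ : TT ≃ₗ[ℂ] TT} {ψ : RR ≃ₗ[ℂ] RR} (h : IsMackey φ ψ) :
    IsMackey φ.symm ψ.symm := by
  intro x y
  have := h (φ.symm x) (ψ.symm y)
  simp only [LinearEquiv.apply_symm_apply] at this
  exact this.symm

/-- The key finiteness lemma: for a Mackey pair, `π_U (φ (W^♯))` is finite dimensional. -/
lemma hard_fin (φ : TT ≃ₗ[ℂ] TT) (ψ : RR ≃ₗ[ℂ] RR) (h : IsMackey φ ψ) :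
    FiniteDimensional ℂ ((Wsharp.map φ.toLinearMap).map piU) := by
  classical
  set C : (ℕ → ℂ) →ₗ[ℂ] (ℕ →₀ ℂ) :=
    piU ∘ₗ (φ.toLinearMap ∘ₗ LinearMap.inl ℂ (ℕ → ℂ) (ℕ →₀ ℂ)) with hC
  have hrange : (Wsharp.map φ.toLinearMap).map piU = LinearMap.range C := by
    rw [hC, LinearMap.range_comp, LinearMap.range_comp, Wsharp]
  have hmack : ∀ (ω : ℕ → ℂ) (ν : ℕ → ℂ),
      Finsupp.linearCombination ℂ ν (C ω)
        = Finsupp.linearCombination ℂ ω ((ψ ((0 : ℕ →₀ ℂ), ν)).1) := by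
    intro ω ν
    have := h (ω, (0 : ℕ →₀ ℂ)) ((0 : ℕ →₀ ℂ), ν)
    simpa [pairB, LinearMap.mk₂_apply, hC, piU] using this
  have key : ∃ n : ℕ, ∀ ω : ℕ → ℂ, (∀ i < n, ω i = 0) → C ω = 0 := by
    by_contra hcon
    push_neg at hcon
    choose w hw1 hw2 using hcon
    have hfin : ∀ n : ℕ, {t : ℂ | (⟨AddMonoidAlgebra.ofCoeff (C (w n))⟩ : Polynomial ℂ).eval t = 0}.Finite := by
      intro n
      exact Polynomial.finite_setOf_isRoot (by simpa [Polynomial.ofFinsupp_eq_zero] using hw2 n)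
    have : ∃ t : ℂ, ∀ n, (⟨AddMonoidAlgebra.ofCoeff (C (w n))⟩ : Polynomial ℂ).eval t ≠ 0 := by
      have hc : (⋃ n, {t : ℂ | (⟨AddMonoidAlgebra.ofCoeff (C (w n))⟩ : Polynomial ℂ).eval t = 0}).Countable :=
        Set.countable_iUnion fun n => (hfin n).countable
      have hne : (⋃ n, {t : ℂ | (⟨AddMonoidAlgebra.ofCoeff (C (w n))⟩ : Polynomial ℂ).eval t = 0}) ≠ Set.univ :=
        fun he => not_countable_complex (he ▸ hc)
      obtain ⟨t, ht⟩ := (Set.ne_univ_iff_exists_notMem _).mp hne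
      exact ⟨t, by simpa using ht⟩
    obtain ⟨t, ht⟩ := this
    set ν : ℕ → ℂ := fun i => t ^ i with hν
    set W : ℕ →₀ ℂ := (ψ ((0 : ℕ →₀ ℂ), ν)).1 with hW
    set n : ℕ := (W.support.sup id) + 1 with hn
    have hWn : ∀ i ∈ W.support, i < n := by
      intro i hi
      have := Finset.le_sup (f := id) hi
      simp only [id] at this
      omega
    have h1 : Finsupp.linearCombination ℂ (w n) W = 0 := by
      rw [Finsupp.linearCombination_apply, Finsupp.sum]
      apply Finset.sum_eq_zero
      intro i hi
      rw [hw1 n i (hWn i hi)]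
      simp
    have h2 := hmack (w n) ν
    rw [← hW, h1] at h2
    have h3 : Finsupp.linearCombination ℂ ν (C (w n)) = (⟨AddMonoidAlgebra.ofCoeff (C (w n))⟩ : Polynomial ℂ).eval t := by
      rw [Polynomial.eval_eq_sum, Finsupp.linearCombination_apply]
      rfl
    exact ht n (by rw [← h3, h2])
  obtain ⟨n, hn⟩ := key
  have hle : LinearMap.range C ≤
      Submodule.map C (Submodule.span ℂ ((fun i => Pi.single i (1 : ℂ)) '' Set.Iio n)) := by
    rintro x ⟨ω, rfl⟩
    set ω₁ : ℕ → ℂ := fun i => if i < n then ω i else 0 with hω₁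
    have hmem : ω₁ ∈ Submodule.span ℂ ((fun i => Pi.single i (1 : ℂ)) '' Set.Iio n) := by
      have hrepr : ω₁ = ∑ i ∈ Finset.range n, ω i • (Pi.single i (1 : ℂ) : ℕ → ℂ) := by
        funext j
        rw [Finset.sum_apply]
        simp only [Pi.smul_apply, Pi.single_apply, smul_eq_mul, mul_ite, mul_one, mul_zero]
        rw [Finset.sum_ite_eq (Finset.range n) j ω]
        simp [hω₁, Finset.mem_range]
      rw [hrepr]
      apply Submodule.sum_mem
      intro i hi
      exact Submodule.smul_mem _ _ (Submodule.subset_span ⟨i, Finset.mem_range.mp hi, rfl⟩)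
    refine ⟨ω₁, hmem, ?_⟩
    have hz : C (ω - ω₁) = 0 := by
      apply hn
      intro i hi
      simp [hω₁, hi]
    have := congrArg (fun v => C ω₁ + v) hz
    simpa [map_sub] using this.symm
  have hfd : FiniteDimensional ℂ
      (Submodule.map C (Submodule.span ℂ ((fun i => Pi.single i (1 : ℂ)) '' Set.Iio n))) := by
    rw [Submodule.map_span]
    exact FiniteDimensional.span_of_finite ℂ (((Set.finite_Iio n).image _).image _)
  rw [hrange]
  exact Submodule.finiteDimensional_of_le hle

lemma map_inf_equiv {M : Type*} [AddCommGroup M] [Module ℂ M] (e : M ≃ₗ[ℂ] M)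
    (p q : Submodule ℂ M) :
    (p ⊓ q).map e.toLinearMap = p.map e.toLinearMap ⊓ q.map e.toLinearMap :=
  Submodule.map_inf e.toLinearMap e.injective

lemma chainA (φ : TT ≃ₗ[ℂ] TT) :
    Nonempty (((Wsharp.map φ.toLinearMap).map piU) ≃ₗ[ℂ]
      ((Wsharp.map φ.toLinearMap).map ((Wsharp.map φ.toLinearMap ⊓ Wsharp).mkQ))) := by
  apply map_iso
  rw [← wsharp_eq_ker, Submodule.ker_mkQ]
  ext x; simp only [Submodule.mem_inf]; tauto

lemma chainB (φ : TT ≃ₗ[ℂ] TT) :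
    Nonempty (((Wsharp.map φ.symm.toLinearMap).map piU) ≃ₗ[ℂ]
      (Wsharp.map ((Wsharp.map φ.toLinearMap ⊓ Wsharp).mkQ))) := by
  obtain ⟨i1⟩ := map_iso piU ((Wsharp.map φ.symm.toLinearMap ⊓ Wsharp).mkQ)
      (Wsharp.map φ.symm.toLinearMap)
      (by rw [← wsharp_eq_ker, Submodule.ker_mkQ]; ext x; simp only [Submodule.mem_inf]; tauto)
  obtain ⟨i2⟩ := q_equiv φ (Wsharp.map φ.symm.toLinearMap ⊓ Wsharp)
      (Wsharp.map φ.symm.toLinearMap)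
  have hKs : (Wsharp.map φ.symm.toLinearMap).map φ.toLinearMap = Wsharp := by
    simp [← Submodule.map_comp]
  rw [map_inf_equiv φ, hKs, inf_comm Wsharp (Wsharp.map φ.toLinearMap)] at i2
  exact ⟨i1.trans i2⟩

lemma deg_eq (φ : TT ≃ₗ[ℂ] TT) :
    deg φ = (finrank ℂ ((Wsharp.map φ.toLinearMap).map
        ((Wsharp.map φ.toLinearMap ⊓ Wsharp).mkQ)) : ℤ)
      - (finrank ℂ (Wsharp.map ((Wsharp.map φ.toLinearMap ⊓ Wsharp).mkQ)) : ℤ) := by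
  obtain ⟨iA⟩ := chainA φ
  obtain ⟨iB⟩ := chainB φ
  have hA : finrank ℂ ((Wsharp.map φ.toLinearMap).map piU)
      = finrank ℂ ((Wsharp.map φ.toLinearMap).map ((Wsharp.map φ.toLinearMap ⊓ Wsharp).mkQ)) :=
    iA.finrank_eq
  have hB : finrank ℂ ((Wsharp.map φ.symm.toLinearMap).map piU)
      = finrank ℂ (Wsharp.map ((Wsharp.map φ.toLinearMap ⊓ Wsharp).mkQ)) :=
    iB.finrank_eq
  unfold deg
  rw [hA, hB]

lemma qfin1 (φ : TT ≃ₗ[ℂ] TT) (ψ : RR ≃ₗ[ℂ] RR) (h : IsMackey φ ψ) :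
    FiniteDimensional ℂ ((Wsharp.map φ.toLinearMap).map
      ((Wsharp.map φ.toLinearMap ⊓ Wsharp).mkQ)) := by
  haveI := hard_fin φ ψ h
  obtain ⟨e⟩ := chainA φ
  exact Module.Finite.equiv e

lemma qfin2 (φ : TT ≃ₗ[ℂ] TT) (ψ : RR ≃ₗ[ℂ] RR) (h : IsMackey φ ψ) :
    FiniteDimensional ℂ (Wsharp.map ((Wsharp.map φ.toLinearMap ⊓ Wsharp).mkQ)) := by
  haveI := hard_fin φ.symm ψ.symm (mackey_symm h)
  obtain ⟨e⟩ := chainB φ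
  exact Module.Finite.equiv e

end AuxProof

/-- `d(φ∘ψ) = d(φ) + d(ψ)` for all `(φ,φ̄), (ψ,ψ̄) ∈ G(T,R)`. -/
theorem stmt10 (φ₁ : TT ≃ₗ[ℂ] TT) (ψ₁ : RR ≃ₗ[ℂ] RR) (h₁ : IsMackey φ₁ ψ₁)
    (φ₂ : TT ≃ₗ[ℂ] TT) (ψ₂ : RR ≃ₗ[ℂ] RR) (h₂ : IsMackey φ₂ ψ₂) :
    deg (φ₂.trans φ₁) = deg φ₁ + deg φ₂ := by
  classical
  have hAeq : Wsharp.map (φ₂.trans φ₁).toLinearMap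
      = (Wsharp.map φ₂.toLinearMap).map φ₁.toLinearMap := by
    rw [← Submodule.map_comp]; rfl
  rw [deg_eq (φ₂.trans φ₁), deg_eq φ₁, deg_eq φ₂, hAeq]
  obtain ⟨iA⟩ := q_equiv φ₁ (Wsharp.map φ₂.toLinearMap ⊓ Wsharp) (Wsharp.map φ₂.toLinearMap)
  obtain ⟨iB⟩ := q_equiv φ₁ (Wsharp.map φ₂.toLinearMap ⊓ Wsharp) Wsharp
  rw [map_inf_equiv φ₁] at iA iB
  have hA : finrank ℂ ((Wsharp.map φ₂.toLinearMap).map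
        ((Wsharp.map φ₂.toLinearMap ⊓ Wsharp).mkQ))
      = finrank ℂ (((Wsharp.map φ₂.toLinearMap).map φ₁.toLinearMap).map
        (((Wsharp.map φ₂.toLinearMap).map φ₁.toLinearMap ⊓ Wsharp.map φ₁.toLinearMap).mkQ)) :=
    iA.finrank_eq
  have hB : finrank ℂ (Wsharp.map ((Wsharp.map φ₂.toLinearMap ⊓ Wsharp).mkQ))
      = finrank ℂ ((Wsharp.map φ₁.toLinearMap).map
        (((Wsharp.map φ₂.toLinearMap).map φ₁.toLinearMap ⊓ Wsharp.map φ₁.toLinearMap).mkQ)) :=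
    iB.finrank_eq
  rw [hA, hB]
  have f3 : FiniteDimensional ℂ (((Wsharp.map φ₂.toLinearMap).map φ₁.toLinearMap).map
      (((Wsharp.map φ₂.toLinearMap).map φ₁.toLinearMap ⊓ Wsharp.map φ₁.toLinearMap).mkQ)) := by
    haveI := qfin1 φ₂ ψ₂ h₂
    exact Module.Finite.equiv iA
  have f4 : FiniteDimensional ℂ ((Wsharp.map φ₁.toLinearMap).map
      (((Wsharp.map φ₂.toLinearMap).map φ₁.toLinearMap ⊓ Wsharp.map φ₁.toLinearMap).mkQ)) := by
    haveI := qfin2 φ₂ ψ₂ h₂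
    exact Module.Finite.equiv iB
  exact main_calc ((Wsharp.map φ₂.toLinearMap).map φ₁.toLinearMap)
    (Wsharp.map φ₁.toLinearMap) Wsharp
    (qfin1 φ₁ ψ₁ h₁) (qfin2 φ₁ ψ₁ h₁) f3 f4
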